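/- A braiding on the split real Tambara-Yamagami category 𝒞_ℝ(K₄ⁿ, h^n, τ) exists if and only if either n > 0, or n = 0 and τ > 0. In terms of solution data: the set of solutions to the reduced hexagon equations is in bijection with pairs (σ, ε) where σ: K₄ⁿ → {±1} is a quadratic form with δσ = h^n and sign sgn(Σσ) = sgn(τ), and ε ∈ {±1}. -/

import Mathlib

/-- The Klein four-group. -/
abbrev K4 : Type := ZMod 2 × ZMod 2

/-- The standard hyperbolic pairing on `K₄`. -/
noncomputable def hq (a b : K4) : ℝˣ :=
  (-1 : ℝˣ) ^ (a.1 * b.2 + a.2 * b.1 : ZMod 2).val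

/-- The `n`-fold orthogonal sum `h^n` of the standard hyperbolic pairing. -/
noncomputable def hpow (n : ℕ) (a b : Fin n → K4) : ℝˣ := ∏ i, hq (a i) (b i)

/-- The reduced hexagon equations for a braiding on the split real
Tambara–Yamagami category `𝒞_ℝ(K₄ⁿ, h^n, τ)`, for data `(σ₀, σ₁, σ₂, σ₃)`. -/
def ReducedSplit (n : ℕ) (τ : ℝ)
    (s : ((Fin n → K4) → (Fin n → K4) → ℝˣ) × ((Fin n → K4) → ℝˣ) ×
      ((Fin n → K4) → ℝˣ) × ((Fin n → K4) → ℝˣ)) : Prop :=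
  (∀ a b, s.1 a b = hpow n a b) ∧
  (∀ a, s.2.1 a ^ 2 = hpow n a a) ∧
  (∀ a b, s.2.1 (a + b) = s.2.1 a * s.2.1 b * hpow n a b) ∧
  (∀ a, s.2.2.1 a = s.2.1 a) ∧
  ((s.2.2.2 0 : ℝ) ^ 2 = τ * ∑ c : Fin n → K4, (s.2.1 c : ℝ)) ∧
  (∀ a, s.2.2.2 a = s.2.2.2 0 * s.2.1 a)

noncomputable def ee (x : ZMod 2) : ℝˣ := (-1 : ℝˣ) ^ x.val

lemma ee_add (x y : ZMod 2) : ee (x + y) = ee x * ee y := by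
  simp only [ee, ZMod.val_add, ← pow_add]
  conv_rhs => rw [← Nat.mod_add_div (x.val + y.val) 2, pow_add, pow_mul]
  simp

lemma hq_eq (a b : K4) : hq a b = ee (a.1 * b.2 + a.2 * b.1) := rfl

lemma ee_zero : ee 0 = 1 := rfl

lemma hq_self (a : K4) : hq a a = 1 := by
  rw [hq_eq]
  have h : a.1 * a.2 + a.2 * a.1 = 0 := by
    rw [mul_comm a.2 a.1]; exact CharTwo.add_self_eq_zero _
  rw [h, ee_zero]

lemma hpow_self (n : ℕ) (a : Fin n → K4) : hpow n a a = 1 := by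
  simp [hpow, hq_self]

noncomputable def qf (a : K4) : ℝˣ := ee (a.1 * a.2)

lemma coc1 (x y t : K4) :
    qf (x + y) * hq (x + y) t = (qf x * hq x t) * (qf y * hq y t) * hq x y := by
  simp only [qf, hq_eq]
  simp only [← ee_add]
  congr 1
  show (x.1 + y.1) * (x.2 + y.2) + ((x.1 + y.1) * t.2 + (x.2 + y.2) * t.1) = _
  ring_nf

/-- The shifted quadratic form `σ_T`. -/
noncomputable def sigT (n : ℕ) (T : Fin n → K4) (a : Fin n → K4) : ℝˣ :=
  ∏ i, (qf (a i) * hq (a i) (T i))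

lemma sigT_coc (n : ℕ) (T a b : Fin n → K4) :
    sigT n T (a + b) = sigT n T a * sigT n T b * hpow n a b := by
  simp only [sigT, hpow, ← Finset.prod_mul_distrib]
  exact Finset.prod_congr rfl fun i _ => coc1 (a i) (b i) (T i)

lemma sum_zmod2 (f : ZMod 2 → ℝ) : ∑ x : ZMod 2, f x = f 0 + f 1 :=
  Fin.sum_univ_two f

lemma sum_k4 (f : K4 → ℝ) :
    ∑ x : K4, f x = f (0,0) + f (0,1) + f (1,0) + f (1,1) := by
  rw [Fintype.sum_prod_type, sum_zmod2 (fun a => ∑ y : ZMod 2, f (a, y)),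
    sum_zmod2, sum_zmod2]
  ring

lemma sum_coord_zero : ∑ x : K4, ((qf x * hq x 0 : ℝˣ) : ℝ) = 2 := by
  rw [sum_k4]
  norm_num [qf, hq, ee, show ZMod.val (1 : ZMod 2) = 1 from rfl,
    show ZMod.val (0 : ZMod 2) = 0 from rfl]

lemma sum_coord_one : ∑ x : K4, ((qf x * hq x (1,1) : ℝˣ) : ℝ) = -2 := by
  rw [sum_k4]
  norm_num [qf, hq, ee, show ZMod.val (1 : ZMod 2) = 1 from rfl,
    show ZMod.val (0 : ZMod 2) = 0 from rfl,
    show ZMod.val (1 + 1 : ZMod 2) = 0 from rfl,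
    show ZMod.val (2 : ZMod 2) = 0 from rfl]

lemma sigT_sum (n : ℕ) (T : Fin n → K4) :
    ∑ a : Fin n → K4, ((sigT n T a : ℝˣ) : ℝ) =
      ∏ i, ∑ x : K4, ((qf x * hq x (T i) : ℝˣ) : ℝ) := by
  rw [Fintype.prod_sum (fun i x => ((qf x * hq x (T i) : ℝˣ) : ℝ))]
  refine Finset.sum_congr rfl fun a _ => ?_
  rw [sigT]; exact map_prod (Units.coeHom ℝ) _ _

lemma coc_zero {n : ℕ} {σ : (Fin n → K4) → ℝˣ}
    (h : ∀ a b, σ (a + b) = σ a * σ b * hpow n a b) : σ 0 = 1 := by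
  have h0 := h 0 0
  rw [add_zero, hpow_self, mul_one] at h0
  exact (mul_eq_left.mp h0.symm)

lemma coc_sq {n : ℕ} {σ : (Fin n → K4) → ℝˣ}
    (h : ∀ a b, σ (a + b) = σ a * σ b * hpow n a b) (a : Fin n → K4) :
    σ a * σ a = 1 := by
  have haa : a + a = 0 := by
    funext i
    exact CharTwo.add_self_eq_zero (a i)
  have h0 := h a a
  rw [haa, hpow_self, mul_one, coc_zero h] at h0
  exact h0.symm

/-- square root as a unit -/
noncomputable def sqrtU (S : ℝ) (h : 0 < S) : ℝˣ :=
  Units.mk0 (Real.sqrt S) (Real.sqrt_pos.mpr h).ne'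

lemma sqrtU_val (S : ℝ) (h : 0 < S) : ((sqrtU S h : ℝˣ) : ℝ) = Real.sqrt S := rfl

lemma pos_of_rs {n : ℕ} {τ : ℝ} {s : ((Fin n → K4) → (Fin n → K4) → ℝˣ) × ((Fin n → K4) → ℝˣ) ×
      ((Fin n → K4) → ℝˣ) × ((Fin n → K4) → ℝˣ)} (hs : ReducedSplit n τ s) :
    0 < τ * ∑ c : Fin n → K4, (s.2.1 c : ℝ) := by
  rw [← hs.2.2.2.2.1]
  exact pow_two_pos_of_ne_zero (Units.ne_zero _)

lemma rs_of (n : ℕ) (τ : ℝ) (σ : (Fin n → K4) → ℝˣ) (ε : ℝˣ)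
    (hcoc : ∀ a b, σ (a + b) = σ a * σ b * hpow n a b)
    (hpos : 0 < τ * ∑ c : Fin n → K4, (σ c : ℝ))
    (hε : ε = 1 ∨ ε = -1) :
    ReducedSplit n τ (hpow n, σ, σ,
      fun a => ε * sqrtU (τ * ∑ c : Fin n → K4, (σ c : ℝ)) hpos * σ a) := by
  refine ⟨fun a b => rfl, ?_, hcoc, fun a => rfl, ?_, ?_⟩
  · intro a
    rw [pow_two, coc_sq hcoc a, hpow_self]
  · show ((ε * sqrtU _ hpos * σ 0 : ℝˣ) : ℝ) ^ 2 = _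
    rw [coc_zero hcoc, mul_one]
    have hε2 : ((ε : ℝˣ) : ℝ) ^ 2 = 1 := by
      rcases hε with h | h <;> rw [h] <;> norm_num
    push_cast [Units.val_mul]
    rw [mul_pow, hε2, one_mul, sqrtU_val, Real.sq_sqrt hpos.le]
  · intro a
    show _ = ε * sqrtU _ hpos * σ 0 * σ a
    rw [coc_zero hcoc, mul_one]

lemma eps_pm {n : ℕ} {τ : ℝ} {s : ((Fin n → K4) → (Fin n → K4) → ℝˣ) × ((Fin n → K4) → ℝˣ) ×
      ((Fin n → K4) → ℝˣ) × ((Fin n → K4) → ℝˣ)} (hs : ReducedSplit n τ s) :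
    s.2.2.2 0 * (sqrtU (τ * ∑ c : Fin n → K4, (s.2.1 c : ℝ)) (pos_of_rs hs))⁻¹ = 1 ∨
      s.2.2.2 0 * (sqrtU (τ * ∑ c : Fin n → K4, (s.2.1 c : ℝ)) (pos_of_rs hs))⁻¹ = -1 := by
  set S := τ * ∑ c : Fin n → K4, (s.2.1 c : ℝ) with hSdef
  have hS : 0 < S := pos_of_rs hs
  have hsq : ((s.2.2.2 0 : ℝˣ) : ℝ) ^ 2 = Real.sqrt S ^ 2 := by
    rw [Real.sq_sqrt hS.le]; exact hs.2.2.2.2.1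
  have habs : ((s.2.2.2 0 : ℝˣ) : ℝ) = Real.sqrt S ∨
      ((s.2.2.2 0 : ℝˣ) : ℝ) = -Real.sqrt S := sq_eq_sq_iff_eq_or_eq_neg.mp hsq
  rcases habs with h | h
  · left
    apply Units.ext
    push_cast [Units.val_mul]
    rw [h, sqrtU_val, mul_inv_cancel₀ (Real.sqrt_pos.mpr hS).ne']
  · right
    apply Units.ext
    push_cast [Units.val_mul]
    rw [h, sqrtU_val, neg_mul, mul_inv_cancel₀ (Real.sqrt_pos.mpr hS).ne']

noncomputable def mkEquiv (n : ℕ) (τ : ℝ) :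
    {s : ((Fin n → K4) → (Fin n → K4) → ℝˣ) × ((Fin n → K4) → ℝˣ) ×
        ((Fin n → K4) → ℝˣ) × ((Fin n → K4) → ℝˣ) // ReducedSplit n τ s} ≃
      {p : ((Fin n → K4) → ℝˣ) × ℝˣ //
        (∀ a b, p.1 (a + b) = p.1 a * p.1 b * hpow n a b) ∧
        (0 < τ * ∑ c : Fin n → K4, (p.1 c : ℝ)) ∧
        (p.2 = 1 ∨ p.2 = -1)} where
  toFun x :=
    ⟨(x.1.2.1, x.1.2.2.2 0 * (sqrtU (τ * ∑ c : Fin n → K4, (x.1.2.1 c : ℝ)) (pos_of_rs x.2))⁻¹),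
      x.2.2.2.1, pos_of_rs x.2, eps_pm x.2⟩
  invFun p :=
    ⟨(hpow n, p.1.1, p.1.1,
        fun a => p.1.2 * sqrtU (τ * ∑ c : Fin n → K4, (p.1.1 c : ℝ)) p.2.2.1 * p.1.1 a),
      rs_of n τ p.1.1 p.1.2 p.2.1 p.2.2.1 p.2.2.2⟩
  left_inv := by
    rintro ⟨⟨s1, s2, s3, s4⟩, hs⟩
    apply Subtype.ext
    dsimp only
    refine Prod.ext ?_ (Prod.ext rfl (Prod.ext ?_ ?_))
    · funext a b
      exact (hs.1 a b).symm
    · funext a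
      exact (hs.2.2.2.1 a).symm
    · funext a
      show s4 0 * (sqrtU _ _)⁻¹ * sqrtU _ _ * s2 a = s4 a
      rw [inv_mul_cancel_right]
      exact (hs.2.2.2.2.2 a).symm
  right_inv := by
    rintro ⟨⟨σ, ε⟩, hcoc, hpos, hε⟩
    dsimp only at hcoc hpos hε
    apply Subtype.ext
    dsimp only
    refine Prod.ext rfl ?_
    show ε * sqrtU _ _ * σ 0 * (sqrtU _ _)⁻¹ = ε
    rw [coc_zero hcoc, mul_one, mul_inv_cancel_right]

lemma exists_sig (n : ℕ) (τ : ℝ)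
    (hτ : τ = ((2 : ℝ) ^ n)⁻¹ ∨ τ = -((2 : ℝ) ^ n)⁻¹) (h : 0 < n ∨ 0 < τ) :
    ∃ σ : (Fin n → K4) → ℝˣ,
      (∀ a b, σ (a + b) = σ a * σ b * hpow n a b) ∧
      0 < τ * ∑ c : Fin n → K4, (σ c : ℝ) := by
  rcases hτ with hτ | hτ
  · -- τ > 0, use T = 0
    refine ⟨sigT n 0, sigT_coc n 0, ?_⟩
    have hτpos : 0 < τ := by rw [hτ]; positivity
    have hsum : 0 < ∑ c : Fin n → K4, ((sigT n 0 c : ℝˣ) : ℝ) := by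
      rw [sigT_sum]
      refine Finset.prod_pos fun i _ => ?_
      rw [show ((0 : Fin n → K4) i) = (0 : K4) from rfl, sum_coord_zero]
      norm_num
    exact mul_pos hτpos hsum
  · -- τ < 0, need n > 0
    have hτneg : τ < 0 := by
      have : (0:ℝ) < ((2:ℝ) ^ n)⁻¹ := by positivity
      rw [hτ]; linarith
    have hn : 0 < n := by
      rcases h with h | h
      · exact h
      · exact absurd h (not_lt.mpr hτneg.le)
    set i0 : Fin n := ⟨0, hn⟩
    set T : Fin n → K4 := fun i => if i = i0 then ((1 : ZMod 2), (1 : ZMod 2)) else 0 with hT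
    refine ⟨sigT n T, sigT_coc n T, ?_⟩
    have hsum : ∑ c : Fin n → K4, ((sigT n T c : ℝˣ) : ℝ) < 0 := by
      rw [sigT_sum]
      rw [← Finset.mul_prod_erase Finset.univ _ (Finset.mem_univ i0)]
      have h0 : ∑ x : K4, ((qf x * hq x (T i0) : ℝˣ) : ℝ) = -2 := by
        rw [hT]; simp only [if_pos rfl]; exact sum_coord_one
      rw [h0]
      have hrest : 0 < ∏ i ∈ Finset.univ.erase i0, ∑ x : K4, ((qf x * hq x (T i) : ℝˣ) : ℝ) := by
        refine Finset.prod_pos fun i hi => ?_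
        have : T i = 0 := by
          rw [hT]; simp only [if_neg (Finset.ne_of_mem_erase hi)]
        rw [this, sum_coord_zero]
        norm_num
      nlinarith
    exact mul_pos_of_neg_of_neg hτneg hsum


/-- Braidings on `𝒞_ℝ(K₄ⁿ, h^n, τ)` (i.e. solutions of the reduced hexagon
equations) exist iff `n > 0` or (`n = 0` and `τ > 0`); moreover the set of
solutions is in bijection with pairs `(σ, ε)` of an `h^n`-admissible quadratic
form `σ` with `sgn(Σσ) = sgn(τ)` and a sign `ε`. -/
theorem stmt15 (n : ℕ) (τ : ℝ)
    (hτ : τ = ((2 : ℝ) ^ n)⁻¹ ∨ τ = -((2 : ℝ) ^ n)⁻¹) :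
    (Nonempty {s : ((Fin n → K4) → (Fin n → K4) → ℝˣ) × ((Fin n → K4) → ℝˣ) ×
        ((Fin n → K4) → ℝˣ) × ((Fin n → K4) → ℝˣ) // ReducedSplit n τ s} ↔
      (0 < n ∨ 0 < τ)) ∧
    Nonempty
      ({s : ((Fin n → K4) → (Fin n → K4) → ℝˣ) × ((Fin n → K4) → ℝˣ) ×
          ((Fin n → K4) → ℝˣ) × ((Fin n → K4) → ℝˣ) // ReducedSplit n τ s} ≃
        {p : ((Fin n → K4) → ℝˣ) × ℝˣ //
          (∀ a b, p.1 (a + b) = p.1 a * p.1 b * hpow n a b) ∧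
          (0 < τ * ∑ c : Fin n → K4, (p.1 c : ℝ)) ∧
          (p.2 = 1 ∨ p.2 = -1)}) := by
  constructor
  · constructor
    · rintro ⟨⟨s, hs⟩⟩
      by_cases hn : 0 < n
      · exact Or.inl hn
      · right
        have hn0 : n = 0 := by omega
        subst hn0
        have hpos := pos_of_rs hs
        haveI : Subsingleton (Fin 0 → K4) := ⟨fun a b => funext fun i => i.elim0⟩
        rw [Fintype.sum_subsingleton (fun c => ((s.2.1 c : ℝˣ) : ℝ)) 0] at hpos
        rw [coc_zero hs.2.2.1] at hpos
        simpa using hpos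
    · intro h
      obtain ⟨σ, hcoc, hpos⟩ := exists_sig n τ hτ h
      exact ⟨(mkEquiv n τ).symm ⟨(σ, 1), hcoc, hpos, Or.inl rfl⟩⟩
  · exact ⟨mkEquiv n τ⟩
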